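/- Let p > 1 and let δ be a real number with δ ≤ −1 or δ ≥ p−1. Then the operator Ĥ^δ_p, defined for a = {a_n}_{n≥2} by Ĥ^δ_p(a)(m) = (log m)^{δ/p} / m^{1/p} · Σ_{n=2}^∞ (log n)^{−δ/p} / ( n^{1/p'} · log(mn) ) · a_n for m ≥ 2, is not bounded on l^p; that is, there is no constant C > 0 such that ‖Ĥ^δ_p a‖_p ≤ C‖a‖_p for all a ∈ l^p. -/

import Mathlib

open scoped ENNReal

lemma aux_not_summable :
    ¬ Summable (fun n : ℕ => 1 / (((n : ℝ) + 3) * Real.log ((n : ℝ) + 3))) := by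
  obtain ⟨f, hf⟩ : ∃ f : ℕ → ℝ, f = fun n : ℕ => if n ≤ 1 then 1 else 1 / ((n : ℝ) * Real.log n) :=
    ⟨_, rfl⟩
  have hf_nonneg : ∀ n, 0 ≤ f n := by
    intro n
    by_cases h : n ≤ 1 <;> simp only [hf, h, if_true, if_false] <;> positivity
  have hanti : ∀ ⦃m n : ℕ⦄, 0 < m → m ≤ n → f n ≤ f m := by
    intro m n hm hmn
    rcases le_or_gt n 1 with h | h
    · have : m ≤ 1 := le_trans hmn h
      simp [hf, h, this]
    · have hn2 : 2 ≤ n := h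
      have hfn : f n = 1 / ((n:ℝ) * Real.log n) := by simp [hf, Nat.not_le.mpr h]
      have hpos : 0 < (n:ℝ) * Real.log n := by
        have : (1:ℝ) < n := by exact_mod_cast h
        have := Real.log_pos this
        positivity
      rcases le_or_gt m 1 with hm1 | hm1
      · have : f m = 1 := by simp [hf, hm1]
        rw [hfn, this]
        rw [div_le_one hpos]
        have h2 : (2:ℝ) ≤ n := by exact_mod_cast hn2
        have := Real.log_le_log (by norm_num : (0:ℝ) < 2) h2
        have hlog2 : 0.6931471803 ≤ Real.log 2 := Real.log_two_gt_d9.le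
        nlinarith [Real.log_nonneg (by linarith : (1:ℝ) ≤ n)]
      · have hm2 : 2 ≤ m := hm1
        have hfm : f m = 1 / ((m:ℝ) * Real.log m) := by simp [hf, Nat.not_le.mpr hm1]
        rw [hfn, hfm]
        have hcast : (m:ℝ) ≤ (n:ℝ) := by exact_mod_cast hmn
        have hlm : 0 ≤ Real.log m := Real.log_nonneg (by exact_mod_cast Nat.one_le_of_lt hm1)
        have hln : Real.log m ≤ Real.log n := Real.log_le_log (by positivity) hcast
        have : (m:ℝ) * Real.log m ≤ (n:ℝ) * Real.log n :=
          mul_le_mul hcast hln hlm (by positivity)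
        have hmpos : 0 < (m:ℝ) * Real.log m := by
          have : (1:ℝ) < m := by exact_mod_cast hm1
          have := Real.log_pos this
          positivity
        exact one_div_le_one_div_of_le hmpos this
  intro hsum
  have hs2 : Summable f := by
    have h3 : Summable (fun n : ℕ => f (n + 3)) := by
      apply hsum.congr
      intro n
      have : ¬ (n + 3 ≤ 1) := by omega
      simp only [hf, this, if_false]
      push_cast
      ring_nf
    exact (summable_nat_add_iff 3).mp h3
  have hcond := (summable_condensed_iff_of_nonneg hf_nonneg hanti).mpr hs2
  have : Summable (fun k : ℕ => 1 / ((k : ℝ) * Real.log 2)) := by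
    have h1 : Summable (fun k : ℕ => (2:ℝ) ^ (k+1) * f (2 ^ (k+1))) :=
      (summable_nat_add_iff 1).mpr hcond
    apply (summable_nat_add_iff 1).mp
    apply h1.congr
    intro k
    have h2k : ¬ ((2:ℕ) ^ (k+1) ≤ 1) := by
      have := Nat.one_lt_two_pow (n := k+1) (by omega)
      omega
    have hne : ((2:ℝ) ^ (k+1)) ≠ 0 := by positivity
    simp only [hf, h2k, if_false]
    push_cast
    rw [Real.log_pow]
    field_simp
    try ring
    norm_cast
  have : Summable (fun k : ℕ => 1 / (k : ℝ)) := by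
    have hlog2 : Real.log 2 ≠ 0 := by
      have := Real.log_pos (by norm_num : (1:ℝ) < 2); linarith
    have := this.mul_right (Real.log 2)
    apply this.congr
    intro k
    rcases Nat.eq_zero_or_pos k with rfl | hk
    · simp
    · field_simp
  exact Real.not_summable_one_div_natCast this

lemma aux_tsum_top :
    ∑' n : ℕ, ENNReal.ofReal (1 / (((n : ℝ) + 3) * Real.log ((n : ℝ) + 3))) = ⊤ := by
  by_contra h
  have := ENNReal.summable_toReal h
  apply aux_not_summable
  apply this.congr
  intro n
  have h1 : (0:ℝ) ≤ Real.log ((n:ℝ)+3) := Real.log_nonneg (by norm_num [Nat.cast_nonneg]; linarith [Nat.cast_nonneg (α := ℝ) n])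
  rw [ENNReal.toReal_ofReal (one_div_nonneg.mpr (mul_nonneg (by positivity) h1))]

lemma aux_tendsto :
    Filter.Tendsto (fun K : ℕ => ∑ n ∈ Finset.range K,
      1 / (((n : ℝ) + 3) * Real.log ((n : ℝ) + 3))) Filter.atTop Filter.atTop := by
  have := (not_summable_iff_tendsto_nat_atTop_of_nonneg
    (f := fun n : ℕ => 1 / (((n : ℝ) + 3) * Real.log ((n : ℝ) + 3)))
    (fun n => one_div_nonneg.mpr (mul_nonneg (by positivity)
      (Real.log_nonneg (by linarith [Nat.cast_nonneg (α := ℝ) n]))))).mp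
    aux_not_summable
  exact this

lemma enorm_real_rpow {x : ℝ} (hx : 0 ≤ x) {p : ℝ} (hp : 0 ≤ p) :
    (‖((x:ℝ):ℂ)‖₊ : ℝ≥0∞) ^ p = ENNReal.ofReal (x ^ p) := by
  rw [Complex.nnnorm_real, ← enorm_eq_nnnorm, Real.enorm_eq_ofReal hx, ENNReal.ofReal_rpow_of_nonneg hx hp]

lemma log_ge_one {x : ℝ} (hx : 3 ≤ x) : 1 ≤ Real.log x := by
  have h1 : Real.exp 1 ≤ 3 := le_trans Real.exp_one_lt_d9.le (by norm_num)
  calc 1 = Real.log (Real.exp 1) := (Real.log_exp 1).symm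
    _ ≤ Real.log x := Real.log_le_log (Real.exp_pos 1) (le_trans h1 hx)

lemma log_two_le_one : Real.log 2 ≤ 1 :=
  le_trans Real.log_two_lt_d9.le (by norm_num)

/-- The `l^p` norm of a sequence indexed from `n = 2` (entry `n` of the abstract
sequence corresponds to `a (n)`, and we sum over `n ≥ 2` via the shift `n + 2`). -/
noncomputable def lpNorm (p : ℝ) (a : ℕ → ℂ) : ℝ≥0∞ :=
  (∑' n : ℕ, (‖a (n + 2)‖₊ : ℝ≥0∞) ^ p) ^ (1 / p)

/-- The operator `Ĥ^δ_p`: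
`Ĥ^δ_p(a)(m) = (log m)^{δ/p} m^{-1/p} ∑_{n≥2} (log n)^{-δ/p} / (n^{1/p'} log(mn)) a_n`,
where `q = p'` is the conjugate exponent of `p`. -/
noncomputable def hatH (p q δ : ℝ) (a : ℕ → ℂ) : ℕ → ℂ := fun m =>
  ((Real.log m ^ (δ / p) / (m : ℝ) ^ (1 / p) : ℝ) : ℂ) *
    ∑' n : ℕ,
      ((Real.log ((n : ℝ) + 2) ^ (-(δ / p)) /
          (((n : ℝ) + 2) ^ (1 / q) * Real.log ((m : ℝ) * ((n : ℝ) + 2))) : ℝ) : ℂ) *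
        a (n + 2)


lemma case_deltaSmall (p q δ C : ℝ) (hp : 1 < p) (hq : 1 / p + 1 / q = 1) (hC : 0 < C)
    (hbound : ∀ a : ℕ → ℂ, lpNorm p a ≠ ⊤ →
      lpNorm p (hatH p q δ a) ≤ ENNReal.ofReal C * lpNorm p a) (hδ1 : δ ≤ -1) : False := by
  have hp0 : (0:ℝ) < p := lt_trans one_pos hp
  have hp0' : p ≠ 0 := ne_of_gt hp0
  have hpinv : 0 < 1/p := by positivity
  have hpinv1 : 1/p < 1 := by rw [div_lt_one hp0]; exact hp
  have hqinv : 0 < 1/q := by linarith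
  have hq0 : 0 < q := one_div_pos.mp hqinv
  have hq0' : q ≠ 0 := ne_of_gt hq0
  have hq1 : 1 < q := by
    have h : 1/q < 1 := by linarith
    rwa [div_lt_one hq0] at h
  have hqpq : q + p = p * q := by field_simp at hq; linarith
  have hlog2 : 0 < Real.log 2 := Real.log_pos one_lt_two

  -- case δ ≤ -1
  obtain ⟨c2, hc2def⟩ : ∃ c : ℝ, c = Real.log 2 ^ (δ/p) / 2 ^ (1/p) := ⟨_, rfl⟩
  have hc2 : 0 < c2 := by
    have h1 : 0 < Real.log 2 ^ (δ/p) := Real.rpow_pos_of_pos hlog2 _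
    have h2 : 0 < (2:ℝ) ^ (1/p) := Real.rpow_pos_of_pos two_pos _
    rw [hc2def]; positivity
  obtain ⟨K, hK⟩ := (Filter.tendsto_atTop.mp aux_tendsto
    ((2:ℝ)^q * ((C/c2)^q + 1))).exists
  obtain ⟨b, hbdef⟩ : ∃ b : ℕ → ℝ, b = fun k : ℕ =>
    Real.log k ^ (-(δ/p)) / ((k:ℝ) ^ (1/q) * Real.log (2*(k:ℝ))) := ⟨_, rfl⟩
  have hb_pos : ∀ k : ℕ, 2 ≤ k → 0 < b k := by
    intro k hk
    have hk1 : (1:ℝ) < (k:ℝ) := by exact_mod_cast hk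
    have hlogk : 0 < Real.log k := Real.log_pos hk1
    have h1 : 0 < Real.log (k:ℝ) ^ (-(δ/p)) := Real.rpow_pos_of_pos hlogk _
    have h2 : 0 < (k:ℝ) ^ (1/q) := Real.rpow_pos_of_pos (by linarith) _
    have h3 : 0 < Real.log (2*(k:ℝ)) := Real.log_pos (by linarith)
    simp only [hbdef]
    positivity
  obtain ⟨aK, haK⟩ : ∃ a : ℕ → ℂ,
    a = fun k : ℕ => if k ≤ K + 2 then ((b k ^ (q-1) : ℝ) : ℂ) else 0 := ⟨_, rfl⟩
  obtain ⟨B, hBdef⟩ : ∃ B : ℝ, B = ∑ n ∈ Finset.range (K+1), b (n+2) ^ q := ⟨_, rfl⟩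
  have hterm_pos : ∀ n : ℕ, 0 < b (n+2) ^ q :=
    fun n => Real.rpow_pos_of_pos (hb_pos (n+2) (by omega)) _
  have hBpos : 0 < B := hBdef ▸ Finset.sum_pos (fun n _ => hterm_pos n) ⟨0, by simp⟩
  have hq1p : (q - 1) * p = q := by nlinarith [hqpq]
  -- Step A : lp norm of aK
  have hAnorm : lpNorm p aK = ENNReal.ofReal B ^ (1/p) := by
    unfold lpNorm
    congr 1
    rw [tsum_eq_sum (s := Finset.range (K+1)) (by
      intro n hn
      have h1 : ¬ (n + 2 ≤ K + 2) := by
        simp only [Finset.mem_range] at hn; omega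
      simp [haK, h1, ENNReal.zero_rpow_of_pos hp0])]
    rw [hBdef, ENNReal.ofReal_sum_of_nonneg (fun n _ => (hterm_pos n).le)]
    apply Finset.sum_congr rfl
    intro n hn
    have h1 : n + 2 ≤ K + 2 := by
      simp only [Finset.mem_range] at hn; omega
    have hbnn : (0:ℝ) ≤ b (n+2) ^ (q-1) := (Real.rpow_pos_of_pos (hb_pos (n+2) (by omega)) _).le
    simp only [haK, if_pos h1]
    rw [enorm_real_rpow hbnn hp0.le]
    congr 1
    rw [← Real.rpow_mul (hb_pos (n+2) (by omega)).le, hq1p]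
  -- Step B : value at m = 2
  have hw : ∀ n : ℕ, Real.log ((n:ℝ)+2) ^ (-(δ/p)) /
      (((n:ℝ)+2) ^ (1/q) * Real.log ((((2:ℕ)):ℝ) * ((n:ℝ)+2))) = b (n+2) := by
    intro n
    simp only [hbdef]
    push_cast
    norm_num
  have hB2 : hatH p q δ aK 2 = ((c2 * B : ℝ) : ℂ) := by
    unfold hatH
    rw [tsum_eq_sum (s := Finset.range (K+1)) (by
      intro n hn
      have h1 : ¬ (n + 2 ≤ K + 2) := by
        simp only [Finset.mem_range] at hn; omega
      simp [haK, h1])]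
    have hsum : ∀ n ∈ Finset.range (K+1),
        ((Real.log ((n:ℝ)+2) ^ (-(δ/p)) /
          (((n:ℝ)+2) ^ (1/q) * Real.log ((((2:ℕ)):ℝ) * ((n:ℝ)+2))) : ℝ) : ℂ) * aK (n+2)
        = ((b (n+2) ^ q : ℝ) : ℂ) := by
      intro n hn
      have h1 : n + 2 ≤ K + 2 := by
        simp only [Finset.mem_range] at hn; omega
      simp only [haK, if_pos h1, hw n]
      rw [← Complex.ofReal_mul]
      congr 1
      rw [← Real.rpow_one_add' (hb_pos (n+2) (by omega)).le (by intro h; nlinarith)]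
      congr 1
      ring
    rw [Finset.sum_congr rfl hsum]
    rw [← Complex.ofReal_sum, ← hBdef, ← Complex.ofReal_mul]
    congr 1
    rw [hc2def]
    norm_num
  -- Step C : lower bound for lp norm of image
  have hCnorm : ENNReal.ofReal (c2 * B) ≤ lpNorm p (hatH p q δ aK) := by
    unfold lpNorm
    have h0 : (‖hatH p q δ aK (0+2)‖₊ : ℝ≥0∞) ^ p ≤
        ∑' n : ℕ, (‖hatH p q δ aK (n+2)‖₊ : ℝ≥0∞) ^ p :=
      ENNReal.le_tsum 0
    have hval : (‖hatH p q δ aK (0+2)‖₊ : ℝ≥0∞) ^ p = ENNReal.ofReal ((c2 * B) ^ p) := by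
      rw [show (0+2 : ℕ) = 2 from rfl, hB2]
      exact enorm_real_rpow (by positivity) hp0.le
    calc ENNReal.ofReal (c2 * B)
        = (ENNReal.ofReal ((c2 * B) ^ p)) ^ (1/p) := by
          rw [ENNReal.ofReal_rpow_of_nonneg (by positivity) hpinv.le,
            ← Real.rpow_mul (by positivity), mul_one_div_cancel hp0', Real.rpow_one]
      _ ≤ (∑' n : ℕ, (‖hatH p q δ aK (n+2)‖₊ : ℝ≥0∞) ^ p) ^ (1/p) := by
          rw [← hval]; exact ENNReal.rpow_le_rpow h0 hpinv.le
  -- Step D : real inequality from the bound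
  have hfin : c2 * B ^ (1/q) ≤ C := by
    have hb1 := hbound aK (by
      rw [hAnorm]
      exact ENNReal.rpow_ne_top_of_nonneg hpinv.le ENNReal.ofReal_ne_top)
    rw [hAnorm] at hb1
    have hb2 : ENNReal.ofReal (c2 * B) ≤ ENNReal.ofReal (C * B ^ (1/p)) := by
      calc ENNReal.ofReal (c2 * B) ≤ ENNReal.ofReal C * ENNReal.ofReal B ^ (1/p) :=
            le_trans hCnorm hb1
        _ = ENNReal.ofReal (C * B ^ (1/p)) := by
            rw [ENNReal.ofReal_rpow_of_nonneg hBpos.le hpinv.le,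
              ← ENNReal.ofReal_mul hC.le]
    have hreal : c2 * B ≤ C * B ^ (1/p) :=
      (ENNReal.ofReal_le_ofReal_iff (by positivity)).mp hb2
    have hsplit : B = B ^ (1/p) * B ^ (1/q) := by
      rw [← Real.rpow_add hBpos, hq, Real.rpow_one]
    have hBp : 0 < B ^ (1/p) := Real.rpow_pos_of_pos hBpos _
    have hreal2 : c2 * (B ^ (1/p) * B ^ (1/q)) ≤ C * B ^ (1/p) := by
      rw [← hsplit]; exact hreal
    rw [show c2 * (B ^ (1/p) * B ^ (1/q)) = (c2 * B ^ (1/q)) * B ^ (1/p) from by ring] at hreal2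
    exact le_of_mul_le_mul_right hreal2 hBp
  -- Step E : B is big
  have key2 : ∀ n : ℕ, (2:ℝ)^(-q) * (1/(((n:ℝ)+3) * Real.log ((n:ℝ)+3)))
      ≤ b (n+3) ^ q := by
    intro n
    have hcast : ((n+3 : ℕ) : ℝ) = (n:ℝ) + 3 := by push_cast; ring
    set x : ℝ := (n:ℝ) + 3 with hxdef
    have hx3 : (3:ℝ) ≤ x := by rw [hxdef]; linarith [Nat.cast_nonneg (α := ℝ) n]
    have hx0 : (0:ℝ) < x := by linarith
    have hL1 : 1 ≤ Real.log x := log_ge_one hx3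
    have hL0 : (0:ℝ) < Real.log x := by linarith
    have hlog2x : (0:ℝ) < Real.log (2*x) := Real.log_pos (by linarith)
    have hbval : b (n+3) = Real.log x ^ (-(δ/p)) / (x ^ (1/q) * Real.log (2*x)) := by
      rw [hbdef]
      simp only [hcast]
    rw [hbval]
    have bq : (Real.log x ^ (-(δ/p)) / (x ^ (1/q) * Real.log (2*x))) ^ q
        = Real.log x ^ (-(δ/p) * q) / (x * Real.log (2*x) ^ q) := by
      rw [Real.div_rpow (Real.rpow_pos_of_pos hL0 _).le
            (mul_nonneg (Real.rpow_pos_of_pos hx0 _).le hlog2x.le),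
          Real.mul_rpow (Real.rpow_pos_of_pos hx0 _).le hlog2x.le,
          ← Real.rpow_mul hL0.le, ← Real.rpow_mul hx0.le,
          one_div_mul_cancel hq0', Real.rpow_one]
    rw [bq]
    have hqp : q / p = q - 1 := by field_simp; linarith [hqpq]
    have hexp : q - 1 ≤ -(δ/p) * q := by
      have h1 : -(δ/p) * q = (-δ) * (q/p) := by ring
      rw [h1, hqp]
      nlinarith [hq1]
    have h1 : Real.log x ^ (q-1) ≤ Real.log x ^ (-(δ/p) * q) :=
      Real.rpow_le_rpow_of_exponent_le hL1 hexp
    have h2 : Real.log (2*x) ≤ 2 * Real.log x := by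
      rw [Real.log_mul two_ne_zero (ne_of_gt hx0)]
      have := log_two_le_one
      linarith
    have h3 : Real.log (2*x) ^ q ≤ 2 ^ q * Real.log x ^ q := by
      calc Real.log (2*x) ^ q ≤ (2 * Real.log x) ^ q :=
            Real.rpow_le_rpow hlog2x.le h2 hq0.le
        _ = 2 ^ q * Real.log x ^ q := Real.mul_rpow (by norm_num) hL0.le
    have hmid : Real.log x ^ (q-1) / (x * (2^q * Real.log x ^ q))
        = 2^(-q) * (1/(x * Real.log x)) := by
      rw [Real.rpow_sub hL0, Real.rpow_one, Real.rpow_neg (by norm_num : (0:ℝ) ≤ 2)]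
      have e3 : (0:ℝ) < (2:ℝ) ^ q := Real.rpow_pos_of_pos two_pos _
      have e4 : (0:ℝ) < Real.log x ^ q := Real.rpow_pos_of_pos hL0 _
      field_simp
      try ring
    rw [← hmid]
    have e3 : (0:ℝ) < (2:ℝ) ^ q := Real.rpow_pos_of_pos two_pos _
    have e4 : (0:ℝ) < Real.log x ^ q := Real.rpow_pos_of_pos hL0 _
    have e5 : (0:ℝ) < Real.log (2*x) ^ q := Real.rpow_pos_of_pos hlog2x _
    gcongr
    try exact (Real.rpow_pos_of_pos hL0 _).le
  have hBbig : (C/c2)^q + 1 ≤ B := by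
    have h1 : (2:ℝ)^(-q) * ∑ n ∈ Finset.range K,
        (1/(((n:ℝ)+3) * Real.log ((n:ℝ)+3))) ≤ B := by
      rw [Finset.mul_sum, hBdef, Finset.sum_range_succ']
      have h2 : ∑ n ∈ Finset.range K,
          (2:ℝ)^(-q) * (1/(((n:ℝ)+3) * Real.log ((n:ℝ)+3)))
          ≤ ∑ n ∈ Finset.range K, b (n+1+2) ^ q := by
        apply Finset.sum_le_sum
        intro n _
        simpa using key2 n
      have h3 : (0:ℝ) ≤ b (0+2) ^ q := (hterm_pos 0).le
      linarith
    have hinv : (2:ℝ)^(-q) * (2:ℝ)^q = 1 := by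
      rw [← Real.rpow_add two_pos]
      simp
    have hnn : (0:ℝ) ≤ (2:ℝ)^(-q) := (Real.rpow_pos_of_pos two_pos _).le
    have h5 := mul_le_mul_of_nonneg_left hK hnn
    calc (C/c2)^q + 1 = ((2:ℝ)^(-q) * (2:ℝ)^q) * ((C/c2)^q + 1) := by rw [hinv]; ring
      _ = (2:ℝ)^(-q) * ((2:ℝ)^q * ((C/c2)^q + 1)) := by ring
      _ ≤ (2:ℝ)^(-q) * ∑ n ∈ Finset.range K,
          (1/(((n:ℝ)+3) * Real.log ((n:ℝ)+3))) := h5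
      _ ≤ B := h1
  have hBgt : C / c2 < B ^ (1/q) := by
    have h0 : (0:ℝ) ≤ C / c2 := (div_pos hC hc2).le
    have h1 : (C/c2)^q < B := by linarith
    calc C / c2 = ((C/c2)^q) ^ (1/q) := by
          rw [← Real.rpow_mul h0, mul_one_div_cancel hq0', Real.rpow_one]
      _ < B ^ (1/q) := Real.rpow_lt_rpow (Real.rpow_nonneg h0 q) h1 hqinv
  have : C < c2 * B ^ (1/q) := by
    have := mul_lt_mul_of_pos_left hBgt hc2
    rwa [mul_div_cancel₀ _ (ne_of_gt hc2)] at this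
  linarith

lemma case_deltaLarge (p q δ C : ℝ) (hp : 1 < p) (hq : 1 / p + 1 / q = 1) (hC : 0 < C)
    (hbound : ∀ a : ℕ → ℂ, lpNorm p a ≠ ⊤ →
      lpNorm p (hatH p q δ a) ≤ ENNReal.ofReal C * lpNorm p a) (hδ2 : p - 1 ≤ δ) : False := by
  have hp0 : (0:ℝ) < p := lt_trans one_pos hp
  have hp0' : p ≠ 0 := ne_of_gt hp0
  have hpinv : 0 < 1/p := by positivity
  have hpinv1 : 1/p < 1 := by rw [div_lt_one hp0]; exact hp
  have hqinv : 0 < 1/q := by linarith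
  have hq0 : 0 < q := one_div_pos.mp hqinv
  have hq0' : q ≠ 0 := ne_of_gt hq0
  have hq1 : 1 < q := by
    have h : 1/q < 1 := by linarith
    rwa [div_lt_one hq0] at h
  have hqpq : q + p = p * q := by field_simp at hq; linarith
  have hlog2 : 0 < Real.log 2 := Real.log_pos one_lt_two

  set a : ℕ → ℂ := fun k => if k = 2 then 1 else 0 with ha
  have hnorm_a : lpNorm p a = 1 := by
    unfold lpNorm
    rw [tsum_eq_single 0]
    · norm_num [ha]
    · intro n hn
      have h2 : n + 2 ≠ 2 := by omega
      simp [ha, h2, ENNReal.zero_rpow_of_pos hp0, hn, hp0]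
  have hH : ∀ m : ℕ, hatH p q δ a m =
      (((Real.log m ^ (δ/p) / (m:ℝ) ^ (1/p)) *
        (Real.log 2 ^ (-(δ/p)) / (2 ^ (1/q) * Real.log ((m:ℝ) * 2)))) : ℝ) := by
    intro m
    unfold hatH
    rw [tsum_eq_single 0]
    · have h02 : (0:ℕ) + 2 = 2 := rfl
      rw [h02]
      simp only [ha, if_pos rfl, Nat.cast_zero, mul_one, zero_add]
      push_cast
      ring
    · intro n hn
      have h2 : n + 2 ≠ 2 := by omega
      simp [ha, h2, hn]
  set c1 : ℝ := Real.log 2 ^ (-δ) / (2 ^ (p/q) * 2 ^ p) with hc1def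
  have hc1 : 0 < c1 := by
    have h1 : 0 < Real.log 2 ^ (-δ) := Real.rpow_pos_of_pos hlog2 _
    have h2 : 0 < (2:ℝ) ^ (p/q) := Real.rpow_pos_of_pos two_pos _
    have h3 : 0 < (2:ℝ) ^ p := Real.rpow_pos_of_pos two_pos _
    positivity
  have key : ∀ m : ℕ, ENNReal.ofReal (c1 * (1/(((m:ℝ)+3) * Real.log ((m:ℝ)+3))))
      ≤ (‖hatH p q δ a ((m+1)+2)‖₊ : ℝ≥0∞) ^ p := by
    intro m
    rw [hH (m+1+2)]
    have hcast : ((m+1+2 : ℕ) : ℝ) = (m:ℝ) + 3 := by push_cast; ring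
    rw [hcast]
    set x : ℝ := (m:ℝ) + 3 with hxdef
    have hx3 : (3:ℝ) ≤ x := by rw [hxdef]; linarith [Nat.cast_nonneg (α := ℝ) m]
    have hx0 : (0:ℝ) < x := by linarith
    have hL1 : 1 ≤ Real.log x := log_ge_one hx3
    have hL0 : (0:ℝ) < Real.log x := by linarith
    have hlogx2 : (0:ℝ) < Real.log (x*2) := Real.log_pos (by linarith)
    have hTnonneg : 0 ≤ (Real.log x ^ (δ/p) / x ^ (1/p)) *
        (Real.log 2 ^ (-(δ/p)) / (2 ^ (1/q) * Real.log (x * 2))) := by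
      have h1 : (0:ℝ) ≤ Real.log x ^ (δ/p) := (Real.rpow_pos_of_pos hL0 _).le
      have h2 : (0:ℝ) ≤ x ^ (1/p) := (Real.rpow_pos_of_pos hx0 _).le
      have h3 : (0:ℝ) ≤ Real.log 2 ^ (-(δ/p)) := (Real.rpow_pos_of_pos hlog2 _).le
      have h4 : (0:ℝ) ≤ (2:ℝ) ^ (1/q) := (Real.rpow_pos_of_pos two_pos _).le
      positivity
    rw [enorm_real_rpow hTnonneg hp0.le]
    apply ENNReal.ofReal_le_ofReal
    have Tp : ((Real.log x ^ (δ/p) / x ^ (1/p)) *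
        (Real.log 2 ^ (-(δ/p)) / (2 ^ (1/q) * Real.log (x * 2)))) ^ p
        = (Real.log x ^ δ / x) *
          (Real.log 2 ^ (-δ) / (2 ^ (p/q) * Real.log (x*2) ^ p)) := by
      rw [Real.mul_rpow (by positivity) (by positivity),
          Real.div_rpow (Real.rpow_pos_of_pos hL0 _).le (Real.rpow_pos_of_pos hx0 _).le,
          Real.div_rpow (Real.rpow_pos_of_pos hlog2 _).le
            (mul_nonneg (Real.rpow_pos_of_pos two_pos _).le hlogx2.le),
          Real.mul_rpow (Real.rpow_pos_of_pos two_pos _).le hlogx2.le,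
          ← Real.rpow_mul hL0.le, ← Real.rpow_mul hx0.le,
          ← Real.rpow_mul hlog2.le, ← Real.rpow_mul (by norm_num : (0:ℝ) ≤ 2),
          div_mul_cancel₀ _ hp0', one_div_mul_cancel hp0', Real.rpow_one,
          show -(δ/p) * p = -δ by field_simp,
          show 1/q * p = p/q by field_simp; try ring]
    rw [Tp]
    have h1 : Real.log x ^ (p-1) ≤ Real.log x ^ δ :=
      Real.rpow_le_rpow_of_exponent_le hL1 (by linarith)
    have h2 : Real.log (x*2) ≤ 2 * Real.log x := by
      rw [Real.log_mul (ne_of_gt hx0) two_ne_zero]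
      have := log_two_le_one
      linarith
    have h3 : Real.log (x*2) ^ p ≤ 2 ^ p * Real.log x ^ p := by
      calc Real.log (x*2) ^ p ≤ (2 * Real.log x) ^ p :=
            Real.rpow_le_rpow hlogx2.le h2 hp0.le
        _ = 2 ^ p * Real.log x ^ p := Real.mul_rpow (by norm_num) hL0.le
    have hmid : (Real.log x ^ (p-1) / x) *
        (Real.log 2 ^ (-δ) / (2^(p/q) * (2^p * Real.log x ^ p)))
        = c1 * (1/(x * Real.log x)) := by
      rw [show (p : ℝ) - 1 = p - 1 from rfl, Real.rpow_sub hL0, Real.rpow_one, hc1def]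
      have e2 : (0:ℝ) < (2:ℝ) ^ (p/q) := Real.rpow_pos_of_pos two_pos _
      have e3 : (0:ℝ) < (2:ℝ) ^ p := Real.rpow_pos_of_pos two_pos _
      have e4 : (0:ℝ) < Real.log x ^ p := Real.rpow_pos_of_pos hL0 _
      field_simp
      try ring
    rw [← hmid]
    have e2 : (0:ℝ) < (2:ℝ) ^ (p/q) := Real.rpow_pos_of_pos two_pos _
    have e3 : (0:ℝ) < Real.log 2 ^ (-δ) := Real.rpow_pos_of_pos hlog2 _
    have e4 : (0:ℝ) < Real.log x ^ (p-1) := Real.rpow_pos_of_pos hL0 _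
    have e5 : (0:ℝ) < Real.log (x*2) ^ p := Real.rpow_pos_of_pos hlogx2 _
    gcongr
  -- sum is infinite
  have hsum_top : ∑' m : ℕ, (‖hatH p q δ a (m+2)‖₊ : ℝ≥0∞) ^ p = ⊤ := by
    rw [← top_le_iff]
    have h1 : ∑' m : ℕ, ENNReal.ofReal (c1 * (1/(((m:ℝ)+3) * Real.log ((m:ℝ)+3)))) = ⊤ := by
      have hco : ∀ m : ℕ, ENNReal.ofReal (c1 * (1/(((m:ℝ)+3) * Real.log ((m:ℝ)+3))))
          = ENNReal.ofReal c1 * ENNReal.ofReal (1/(((m:ℝ)+3) * Real.log ((m:ℝ)+3))) :=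
        fun m => ENNReal.ofReal_mul hc1.le
      rw [tsum_congr hco, ENNReal.tsum_mul_left, aux_tsum_top, ENNReal.mul_top]
      simp [hc1, ne_of_gt hc1]
    calc (⊤:ℝ≥0∞) = ∑' m : ℕ, ENNReal.ofReal (c1 * (1/(((m:ℝ)+3) * Real.log ((m:ℝ)+3)))) :=
          h1.symm
      _ ≤ ∑' m : ℕ, (‖hatH p q δ a ((m+1)+2)‖₊ : ℝ≥0∞) ^ p := ENNReal.tsum_le_tsum key
      _ ≤ ∑' m : ℕ, (‖hatH p q δ a (m+2)‖₊ : ℝ≥0∞) ^ p :=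
          ENNReal.tsum_comp_le_tsum_of_injective (f := fun m : ℕ => m + 1)
            (add_left_injective 1) _
  have htop : lpNorm p (hatH p q δ a) = ⊤ := by
    unfold lpNorm
    rw [hsum_top, ENNReal.top_rpow_of_pos hpinv]
  have hb := hbound a (by rw [hnorm_a]; exact ENNReal.one_ne_top)
  rw [htop, hnorm_a, mul_one, top_le_iff] at hb
  exact ENNReal.ofReal_ne_top hb


/-- **(Claim in Remark 4.1.)** For `p > 1` and `δ ≤ −1` or `δ ≥ p−1`, the operator
`Ĥ^δ_p` is not bounded on `l^p`: there is no constant `C > 0` with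
`‖Ĥ^δ_p a‖_p ≤ C ‖a‖_p` for all `a ∈ l^p`. -/
theorem hatH_not_bounded (p q δ : ℝ) (hp : 1 < p) (hq : 1 / p + 1 / q = 1)
    (hδ : δ ≤ -1 ∨ p - 1 ≤ δ) :
    ¬ ∃ C : ℝ, 0 < C ∧ ∀ a : ℕ → ℂ, lpNorm p a ≠ ⊤ →
      lpNorm p (hatH p q δ a) ≤ ENNReal.ofReal C * lpNorm p a := by
  rintro ⟨C, hC, hbound⟩
  obtain hδ1 | hδ2 := hδ
  · exact case_deltaSmall p q δ C hp hq hC hbound hδ1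
  · exact case_deltaLarge p q δ C hp hq hC hbound hδ2
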